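/- Let Λ be twice continuously differentiable on an interval I with inf_{t∈I} Λ''(t) = δ > 0. Fix β and let ψᵢ(z) = Λ(z) - Λ'(Xᵢᵀβ)z. If u, β ∈ ℝᵖ satisfy Xᵢᵀu, Xᵢᵀβ ∈ I for all i and |spt(u) ∪ spt(β)| ≤ (1-ν)(1+1/μ(X)), then Σᵢ[ψᵢ(Xᵢᵀu) - ψᵢ(Xᵢᵀβ)] ≥ (δν(1+μ(X))/2) · min_j ‖V_j‖₂² · ‖u-β‖₂². -/

import Mathlib

private lemma deriv_gap {I : Set ℝ} (hI : Convex ℝ I) {g' g'' : ℝ → ℝ} {δ : ℝ}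
    (hg'' : ∀ t ∈ I, HasDerivAt g' (g'' t) t) (hδI : ∀ t ∈ I, δ ≤ g'' t)
    {a b : ℝ} (ha : a ∈ I) (hb : b ∈ I) (hab : a ≤ b) :
    δ * (b - a) ≤ g' b - g' a := by
  have hIcc : Set.Icc a b ⊆ I := hI.ordConnected.out ha hb
  set k : ℝ → ℝ := fun t => g' t - δ * t with hk
  have hkd : ∀ t ∈ I, HasDerivAt k (g'' t - δ) t := fun t ht => by
    have h0 := (hg'' t ht).sub ((hasDerivAt_id t).const_mul δ)
    convert h0 using 1 <;> first | rfl | ring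
  have hmono : MonotoneOn k (Set.Icc a b) := by
    apply monotoneOn_of_deriv_nonneg (convex_Icc a b)
    · exact fun t ht => (hkd t (hIcc ht)).continuousAt.continuousWithinAt
    · intro t ht
      rw [interior_Icc] at ht
      exact ((hkd t (hIcc (Set.Ioo_subset_Icc_self ht))).differentiableAt).differentiableWithinAt
    · intro t ht
      rw [interior_Icc] at ht
      rw [(hkd t (hIcc (Set.Ioo_subset_Icc_self ht))).deriv]
      linarith [hδI t (hIcc (Set.Ioo_subset_Icc_self ht))]
  have h := hmono (Set.left_mem_Icc.2 hab) (Set.right_mem_Icc.2 hab) hab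
  simp only [hk] at h
  linarith

private lemma strong_lower {I : Set ℝ} (hI : Convex ℝ I) {g g' g'' : ℝ → ℝ} {δ : ℝ}
    (hg : ∀ t ∈ I, HasDerivAt g (g' t) t)
    (hg'' : ∀ t ∈ I, HasDerivAt g' (g'' t) t) (hδI : ∀ t ∈ I, δ ≤ g'' t)
    {a b : ℝ} (ha : a ∈ I) (hb : b ∈ I) :
    δ / 2 * (b - a) ^ 2 ≤ g b - g a - g' a * (b - a) := by
  set φ : ℝ → ℝ := fun t => g t - g' a * t - δ / 2 * (t - a) ^ 2 with hφ
  have hφd : ∀ t ∈ I, HasDerivAt φ (g' t - g' a - δ * (t - a)) t := by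
    intro t ht
    have h1 : HasDerivAt (fun t => δ / 2 * (t - a) ^ 2) (δ * (t - a)) t := by
      have h2 := (((hasDerivAt_id t).sub_const a).pow 2).const_mul (δ / 2)
      simp only [id_eq] at h2
      convert h2 using 1 <;> first | rfl | (push_cast; ring)
    have h3 := ((hg t ht).sub ((hasDerivAt_id t).const_mul (g' a))).sub h1
    convert h3 using 1 <;> first | rfl | ring
  rcases le_total a b with hab | hab
  · have hIcc : Set.Icc a b ⊆ I := hI.ordConnected.out ha hb
    have hmono : MonotoneOn φ (Set.Icc a b) := by
      apply monotoneOn_of_deriv_nonneg (convex_Icc a b)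
      · exact fun t ht => (hφd t (hIcc ht)).continuousAt.continuousWithinAt
      · intro t ht; rw [interior_Icc] at ht
        exact (hφd t (hIcc (Set.Ioo_subset_Icc_self ht))).differentiableAt.differentiableWithinAt
      · intro t ht; rw [interior_Icc] at ht
        have htI := hIcc (Set.Ioo_subset_Icc_self ht)
        rw [(hφd t htI).deriv]
        have := deriv_gap hI hg'' hδI ha htI ht.1.le
        linarith
    have h := hmono (Set.left_mem_Icc.2 hab) (Set.right_mem_Icc.2 hab) hab
    simp only [hφ] at h
    nlinarith [h]
  · have hIcc : Set.Icc b a ⊆ I := hI.ordConnected.out hb ha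
    have hmono : AntitoneOn φ (Set.Icc b a) := by
      apply antitoneOn_of_deriv_nonpos (convex_Icc b a)
      · exact fun t ht => (hφd t (hIcc ht)).continuousAt.continuousWithinAt
      · intro t ht; rw [interior_Icc] at ht
        exact (hφd t (hIcc (Set.Ioo_subset_Icc_self ht))).differentiableAt.differentiableWithinAt
      · intro t ht; rw [interior_Icc] at ht
        have htI := hIcc (Set.Ioo_subset_Icc_self ht)
        rw [(hφd t htI).deriv]
        have := deriv_gap hI hg'' hδI htI ha ht.2.le
        linarith
    have h := hmono (Set.left_mem_Icc.2 hab) (Set.right_mem_Icc.2 hab) hab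
    simp only [hφ] at h
    nlinarith [h]

private lemma coherence_quad_lb (n p : ℕ)
    (hnep : (Finset.univ : Finset (Fin p)).Nonempty)
    (X : Matrix (Fin n) (Fin p) ℝ) (μ ν : ℝ)
    (hμ : 0 < μ) (hν0 : 0 < ν) (hν1 : ν < 1)
    (hcoh : ∀ i j : Fin p, i ≠ j →
      |∑ k, X k i * X k j| ≤ μ * Real.sqrt (∑ k, X k i ^ 2) * Real.sqrt (∑ k, X k j ^ 2))
    (u β : Fin p → ℝ)
    (hspt : (((Finset.univ.filter fun j => u j ≠ 0) ∪
        (Finset.univ.filter fun j => β j ≠ 0)).card : ℝ) ≤ (1 - ν) * (1 + 1 / μ)) :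
    ν * (1 + μ) * (Finset.univ.inf' hnep fun j => ∑ i, X i j ^ 2)
        * ∑ j, (u j - β j) ^ 2
      ≤ ∑ i, (∑ j, X i j * (u j - β j)) ^ 2 := by
  classical
  set w : Fin p → ℝ := fun j => u j - β j with hw
  set nrm : Fin p → ℝ := fun j => Real.sqrt (∑ i, X i j ^ 2) with hnrm
  set a : Fin p → ℝ := fun j => |w j| * nrm j with ha
  set S₀ : Finset (Fin p) := (Finset.univ.filter fun j => u j ≠ 0) ∪
      (Finset.univ.filter fun j => β j ≠ 0) with hS₀
  have hn2 : ∀ j, nrm j ^ 2 = ∑ i, X i j ^ 2 := fun j =>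
    Real.sq_sqrt (Finset.sum_nonneg fun i _ => sq_nonneg _)
  have hnn : ∀ j, 0 ≤ nrm j := fun j => Real.sqrt_nonneg _
  -- expansion of the quadratic form
  have hQ : ∑ i, (∑ j, X i j * w j) ^ 2
      = ∑ j, ∑ k, w j * w k * ∑ i, X i j * X i k := by
    have h1 : ∀ i, (∑ j, X i j * w j) ^ 2 = ∑ j, ∑ k, w j * w k * (X i j * X i k) := by
      intro i
      rw [sq, Finset.sum_mul_sum]
      exact Finset.sum_congr rfl fun j _ => Finset.sum_congr rfl fun k _ => by ring
    simp only [h1, Finset.mul_sum]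
    rw [Finset.sum_comm]
    refine Finset.sum_congr rfl fun j _ => ?_
    rw [Finset.sum_comm]
  -- off-diagonal bound
  have hoff : ∀ j k : Fin p, j ≠ k → -(μ * (a j * a k)) ≤ w j * w k * ∑ i, X i j * X i k := by
    intro j k hjk
    have h1 : |w j * w k * ∑ i, X i j * X i k| ≤ μ * (a j * a k) := by
      rw [abs_mul, abs_mul]
      have := hcoh j k hjk
      have h2 : |w j| * |w k| * |∑ i, X i j * X i k|
          ≤ |w j| * |w k| * (μ * nrm j * nrm k) :=
        mul_le_mul_of_nonneg_left this (mul_nonneg (abs_nonneg _) (abs_nonneg _))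
      calc |w j| * |w k| * |∑ i, X i j * X i k| ≤ |w j| * |w k| * (μ * nrm j * nrm k) := h2
        _ = μ * (a j * a k) := by simp only [ha]; ring
    linarith [neg_abs_le (w j * w k * ∑ i, X i j * X i k)]
  -- diagonal
  have hdiag : ∀ j, w j * w j * ∑ i, X i j * X i j = a j ^ 2 := by
    intro j
    simp only [ha, mul_pow, sq_abs]
    rw [hn2 j]
    simp only [sq]
  have hsplit : ∀ j, (∑ k, w j * w k * ∑ i, X i j * X i k)
      = a j ^ 2 + ∑ k ∈ Finset.univ.erase j, w j * w k * ∑ i, X i j * X i k := by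
    intro j
    rw [← Finset.add_sum_erase _ _ (Finset.mem_univ j), hdiag j]
  -- sum of products over off-diagonal
  have hT : ∑ j, ∑ k ∈ Finset.univ.erase j, (a j * a k)
      = (∑ j, a j) ^ 2 - ∑ j, a j ^ 2 := by
    have h1 : ∀ j : Fin p, ∑ k ∈ Finset.univ.erase j, (a j * a k)
        = a j * (∑ k, a k) - a j ^ 2 := by
      intro j
      rw [← Finset.mul_sum, Finset.sum_erase_eq_sub (Finset.mem_univ j)]
      ring
    simp only [h1, Finset.sum_sub_distrib, ← Finset.sum_mul, sq]
  -- support and Cauchy-Schwarz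
  have hsupp : ∀ j ∉ S₀, a j = 0 := by
    intro j hj
    simp only [hS₀, Finset.mem_union, Finset.mem_filter, Finset.mem_univ, true_and,
      not_or, not_not] at hj
    simp [ha, hw, hj.1, hj.2]
  have hSsum : ∑ j, a j = ∑ j ∈ S₀, a j :=
    (Finset.sum_subset (Finset.subset_univ _) (fun j _ hj => hsupp j hj)).symm
  have hA0 : (0:ℝ) ≤ ∑ j, a j ^ 2 := Finset.sum_nonneg fun j _ => sq_nonneg _
  have hCS : (∑ j, a j) ^ 2 ≤ (S₀.card : ℝ) * ∑ j, a j ^ 2 := by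
    rw [hSsum]
    calc (∑ j ∈ S₀, a j) ^ 2 = (∑ j ∈ S₀, 1 * a j) ^ 2 := by simp
      _ ≤ (∑ j ∈ S₀, (1:ℝ) ^ 2) * ∑ j ∈ S₀, a j ^ 2 :=
          Finset.sum_mul_sq_le_sq_mul_sq _ _ _
      _ = (S₀.card : ℝ) * ∑ j ∈ S₀, a j ^ 2 := by simp
      _ ≤ (S₀.card : ℝ) * ∑ j, a j ^ 2 := by
          apply mul_le_mul_of_nonneg_left _ (Nat.cast_nonneg _)
          exact Finset.sum_le_sum_of_subset_of_nonneg (Finset.subset_univ _)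
            fun j _ _ => sq_nonneg _
  have hcard : μ * (S₀.card : ℝ) ≤ (1 - ν) * (1 + μ) := by
    have h1 : μ * (S₀.card : ℝ) ≤ μ * ((1 - ν) * (1 + 1 / μ)) :=
      mul_le_mul_of_nonneg_left hspt hμ.le
    have h2 : μ * ((1 - ν) * (1 + 1 / μ)) = (1 - ν) * (1 + μ) := by
      have h0 : μ * (1 / μ) = 1 := mul_one_div_cancel hμ.ne'
      linear_combination (1 - ν) * h0
    linarith
  -- main quadratic lower bound
  have hQlb : ν * (1 + μ) * ∑ j, a j ^ 2 ≤ ∑ i, (∑ j, X i j * w j) ^ 2 := by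
    rw [hQ]
    have h1 : ∑ j, (a j ^ 2 + ∑ k ∈ Finset.univ.erase j, -(μ * (a j * a k)))
        ≤ ∑ j, ∑ k, w j * w k * ∑ i, X i j * X i k := by
      apply Finset.sum_le_sum
      intro j _
      rw [hsplit j]
      apply add_le_add_right
      apply Finset.sum_le_sum
      intro k hk
      exact hoff j k (Ne.symm (Finset.ne_of_mem_erase hk))
    have h2 : ∑ j, (a j ^ 2 + ∑ k ∈ Finset.univ.erase j, -(μ * (a j * a k)))
        = (1 + μ) * (∑ j, a j ^ 2) - μ * (∑ j, a j) ^ 2 := by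
      have e1 : ∑ j, ∑ k ∈ Finset.univ.erase j, -(μ * (a j * a k))
          = -(μ * ((∑ j, a j) ^ 2 - ∑ j, a j ^ 2)) := by
        rw [← hT, Finset.mul_sum, ← Finset.sum_neg_distrib]
        exact Finset.sum_congr rfl fun j _ => by
          rw [Finset.mul_sum, ← Finset.sum_neg_distrib]
      rw [Finset.sum_add_distrib, e1]
      ring
    have h3 : μ * (∑ j, a j) ^ 2 ≤ (1 - ν) * (1 + μ) * ∑ j, a j ^ 2 := by
      calc μ * (∑ j, a j) ^ 2 ≤ μ * ((S₀.card : ℝ) * ∑ j, a j ^ 2) :=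
            mul_le_mul_of_nonneg_left hCS hμ.le
        _ = μ * (S₀.card : ℝ) * ∑ j, a j ^ 2 := by ring
        _ ≤ (1 - ν) * (1 + μ) * ∑ j, a j ^ 2 :=
            mul_le_mul_of_nonneg_right hcard hA0
    nlinarith [h1, h2, h3]
  -- minimum column norm bound
  have hmin : (Finset.univ.inf' hnep fun j => ∑ i, X i j ^ 2) * ∑ j, w j ^ 2
      ≤ ∑ j, a j ^ 2 := by
    rw [Finset.mul_sum]
    apply Finset.sum_le_sum
    intro j _
    have h1 : (Finset.univ.inf' hnep fun j => ∑ i, X i j ^ 2) ≤ ∑ i, X i j ^ 2 :=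
      Finset.inf'_le _ (Finset.mem_univ j)
    have h2 : a j ^ 2 = w j ^ 2 * ∑ i, X i j ^ 2 := by
      simp only [ha, mul_pow, sq_abs, hn2 j]
    rw [h2]
    nlinarith [sq_nonneg (w j)]
  have hνμ : (0:ℝ) < ν * (1 + μ) := mul_pos hν0 (by linarith)
  calc ν * (1 + μ) * (Finset.univ.inf' hnep fun j => ∑ i, X i j ^ 2) * ∑ j, w j ^ 2
      = ν * (1 + μ) * ((Finset.univ.inf' hnep fun j => ∑ i, X i j ^ 2) * ∑ j, w j ^ 2) := by
        ring
    _ ≤ ν * (1 + μ) * ∑ j, a j ^ 2 := mul_le_mul_of_nonneg_left hmin hνμ.le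
    _ ≤ ∑ i, (∑ j, X i j * w j) ^ 2 := hQlb


/-- Strong convexity bound for exponential linear models: if `Λ'' ≥ δ > 0` on the
interval `I` and supports are jointly small relative to the coherence, then
`Σᵢ[ψᵢ(Xᵢᵀu) - ψᵢ(Xᵢᵀβ)] ≥ (δν(1+μ)/2) minⱼ‖Vⱼ‖₂² ‖u-β‖₂²`
where `ψᵢ(z) = Λ(z) - Λ'(Xᵢᵀβ)z`. -/
theorem exp_linear_condition_H2 (n p : ℕ) (hp : 0 < p)
    (hnep : (Finset.univ : Finset (Fin p)).Nonempty)
    (X : Matrix (Fin n) (Fin p) ℝ) (μ ν δ : ℝ)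
    (hcol : ∀ j, ∃ i, X i j ≠ 0) (hμ : 0 < μ) (hν0 : 0 < ν) (hν1 : ν < 1) (hδ : 0 < δ)
    (hcoh : ∀ i j : Fin p, i ≠ j →
      |∑ k, X k i * X k j| ≤ μ * Real.sqrt (∑ k, X k i ^ 2) * Real.sqrt (∑ k, X k j ^ 2))
    (I : Set ℝ) (hI : Convex ℝ I)
    (Λ Λ' Λ'' : ℝ → ℝ)
    (hΛ' : ∀ t ∈ I, HasDerivAt Λ (Λ' t) t)
    (hΛ'' : ∀ t ∈ I, HasDerivAt Λ' (Λ'' t) t)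
    (hδI : ∀ t ∈ I, δ ≤ Λ'' t)
    (u β : Fin p → ℝ)
    (huI : ∀ i, (∑ j, X i j * u j) ∈ I) (hβI : ∀ i, (∑ j, X i j * β j) ∈ I)
    (hspt : (((Finset.univ.filter fun j => u j ≠ 0) ∪
        (Finset.univ.filter fun j => β j ≠ 0)).card : ℝ) ≤ (1 - ν) * (1 + 1 / μ)) :
    δ * ν * (1 + μ) / 2 * (Finset.univ.inf' hnep fun j => ∑ i, X i j ^ 2)
        * ∑ j, (u j - β j) ^ 2
      ≤ ∑ i, ((Λ (∑ j, X i j * u j) - Λ' (∑ j, X i j * β j) * ∑ j, X i j * u j)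
          - (Λ (∑ j, X i j * β j) - Λ' (∑ j, X i j * β j) * ∑ j, X i j * β j)) := by
  have hq := coherence_quad_lb n p hnep X μ ν hμ hν0 hν1 hcoh u β hspt
  have hdiff : ∀ i, (∑ j, X i j * u j) - (∑ j, X i j * β j)
      = ∑ j, X i j * (u j - β j) := by
    intro i
    rw [← Finset.sum_sub_distrib]
    exact Finset.sum_congr rfl fun j _ => (mul_sub _ _ _).symm
  have step1 : δ / 2 * ∑ i, (∑ j, X i j * (u j - β j)) ^ 2
      ≤ ∑ i, ((Λ (∑ j, X i j * u j) - Λ' (∑ j, X i j * β j) * ∑ j, X i j * u j)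
          - (Λ (∑ j, X i j * β j) - Λ' (∑ j, X i j * β j) * ∑ j, X i j * β j)) := by
    rw [Finset.mul_sum]
    apply Finset.sum_le_sum
    intro i _
    have h := strong_lower hI hΛ' hΛ'' hδI (hβI i) (huI i)
    rw [← hdiff i]
    nlinarith [h]
  calc δ * ν * (1 + μ) / 2 * (Finset.univ.inf' hnep fun j => ∑ i, X i j ^ 2)
        * ∑ j, (u j - β j) ^ 2
      = δ / 2 * (ν * (1 + μ) * (Finset.univ.inf' hnep fun j => ∑ i, X i j ^ 2)
        * ∑ j, (u j - β j) ^ 2) := by ring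
    _ ≤ δ / 2 * ∑ i, (∑ j, X i j * (u j - β j)) ^ 2 :=
        mul_le_mul_of_nonneg_left hq (by linarith)
    _ ≤ _ := step1
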